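/- Let Λ be a finitely generated free abelian group, Λ' an abelian group with no 2-torsion, and S ⊆ Λ a subset with 0 ∈ S, −S = S, S + 2Λ ⊆ S, and such that S generates Λ. Suppose ε : S → Λ' satisfies ε(μ + 2λ) = ε(μ) + 2ε(λ) for all μ, λ ∈ S, and ε vanishes on some subset of S that is a ℤ-basis of Λ. Then ε = 0. -/

import Mathlib

/-- Let `Λ` be a finitely generated free abelian group, `Λ'` an abelian group with no
2-torsion, and `S ⊆ Λ` with `0 ∈ S`, `−S = S`, `S + 2Λ ⊆ S` and `S` generating `Λ`.
If `ε : S → Λ'` satisfies `ε(μ + 2λ) = ε(μ) + 2ε(λ)` for `μ, λ ∈ S` and vanishes on a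
subset of `S` which is a `ℤ`-basis of `Λ`, then `ε = 0` on `S`. -/
theorem stmt_11 (Λ : Type) [AddCommGroup Λ] (n : ℕ) (bΛ : Module.Basis (Fin n) ℤ Λ)
    (Λ' : Type) [AddCommGroup Λ']
    (h2tor : ∀ x : Λ', 2 • x = 0 → x = 0)
    (S : Set Λ) (h0S : (0 : Λ) ∈ S) (hneg : ∀ s ∈ S, -s ∈ S)
    (h2Λ : ∀ s ∈ S, ∀ lam : Λ, s + 2 • lam ∈ S)
    (hgen : AddSubgroup.closure S = ⊤)
    (ε : Λ → Λ')
    (heq : ∀ μ ∈ S, ∀ lam ∈ S, ε (μ + 2 • lam) = ε μ + 2 • ε lam)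
    (hvan : ∃ (ι : Type) (ν : Module.Basis ι ℤ Λ), ∀ i : ι, ν i ∈ S ∧ ε (ν i) = 0) :
    ∀ s ∈ S, ε s = 0 := by
  obtain ⟨ι, ν, hν⟩ := hvan
  -- ε 0 = 0
  have hε0 : ε 0 = 0 := by
    have h := heq 0 h0S 0 h0S
    simp only [smul_zero, add_zero] at h
    exact h2tor _ (left_eq_add.mp h)
  -- The set of lam such that ε (μ + 2•lam) = ε μ for all μ ∈ S is a subgroup.
  let P : AddSubgroup Λ :=
  { carrier := {lam | ∀ μ ∈ S, ε (μ + 2 • lam) = ε μ}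
    zero_mem' := by intro μ hμ; simp
    add_mem' := by
      intro a b ha hb μ hμ
      have h2 := hb (μ + 2 • a) (h2Λ μ hμ a)
      have : μ + 2 • (a + b) = (μ + 2 • a) + 2 • b := by rw [smul_add]; abel
      rw [this, h2, ha μ hμ]
    neg_mem' := by
      intro a ha μ hμ
      have h1 := ha (μ + 2 • (-a)) (h2Λ μ hμ (-a))
      have : μ + 2 • (-a) + 2 • a = μ := by rw [smul_neg]; abel
      rw [this] at h1
      exact h1.symm }
  have hP : ∀ lam : Λ, lam ∈ P := by
    intro lam
    have hle : (⊤ : Submodule ℤ Λ) ≤ AddSubgroup.toIntSubmodule P := by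
      rw [← ν.span_eq]
      apply Submodule.span_le.mpr
      rintro _ ⟨i, rfl⟩
      intro μ hμ
      rw [heq μ hμ (ν i) (hν i).1, (hν i).2, smul_zero, add_zero]
    exact hle Submodule.mem_top
  intro s hs
  have h1 := hP s 0 h0S
  have h2 := heq 0 h0S s hs
  rw [h1, hε0, zero_add] at h2
  exact h2tor _ h2.symm
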